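/- Fix unitaries U_1, ..., U_L on (C²)^{⊗n}. Define, on the Hilbert space (C²)^{⊗n} ⊗ (C²)^{⊗L}, the Hamiltonian H_final = (1/2)Σ_{ℓ=1}^L H_ℓ + H_input + H_clock, where H_clock = Σ_{ℓ=1}^{L-1} |01⟩⟨01|^c_{ℓ,ℓ+1}, H_input = Σ_{i=1}^n |1⟩⟨1|_i ⊗ |0⟩⟨0|^c_1, and H_ℓ = I⊗|100⟩⟨100|^c − U_ℓ⊗|110⟩⟨100|^c − U_ℓ†⊗|100⟩⟨110|^c + I⊗|110⟩⟨110|^c (with boundary modifications for ℓ = 1, L). Then the history state |η⟩ = (1/√(L+1)) Σ_{ℓ=0}^L (U_ℓ···U_1|0^n⟩) ⊗ |1^ℓ 0^{L−ℓ}⟩ satisfies H_final |η⟩ = 0, and since H_final is positive semidefinite, |η⟩ is a ground state of H_final with eigenvalue 0. -/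

import Mathlib

open scoped ComplexOrder

/-! Kitaev's final Hamiltonian for the adiabatic simulation of a quantum circuit, and
the fact that the history state is a ground state with eigenvalue `0`.

The Hilbert space is that of `n` computational qubits together with `L` clock qubits;
a computational basis element is a pair `(x, c)` with `x : Fin n → Bool` and
`c : Fin L → Bool`.  Clock qubits are numbered `1, …, L` as in the paper; `vclk c j`
gives the value of the `0`-indexed clock qubit `j ∈ {0, …, L-1}`, extended virtually by
`1`s to the left (`j < 0`) and `0`s to the right (`j ≥ L`), which uniformly encodes the
boundary modifications of the terms `H_1` and `H_L`. -/

/-- Value of clock qubit `j` (0-indexed, as an integer), with virtual `1`s to the left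
and `0`s to the right. -/
def vclk {L : ℕ} (c : Fin L → Bool) (j : ℤ) : Bool :=
  if j < 0 then true else if h : j.toNat < L then c ⟨j.toNat, h⟩ else false

/-- `c` and `c'` agree on all clock qubits whose (0-indexed, integer) position is
outside `T`. -/
def agreeOff {L : ℕ} (c c' : Fin L → Bool) (T : Finset ℤ) : Prop :=
  ∀ j : Fin L, ((j : ℕ) : ℤ) ∉ T → c j = c' j

instance {L : ℕ} (c c' : Fin L → Bool) (T : Finset ℤ) : Decidable (agreeOff c c' T) := by
  unfold agreeOff; infer_instance

/-- The unary clock state `|1^ℓ 0^(L-ℓ)⟩`. -/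
def clk (L : ℕ) (ℓ : ℕ) : Fin L → Bool := fun j => decide ((j : ℕ) < ℓ)

/-- The propagation term
`H_ℓ = I⊗|100⟩⟨100| − U_ℓ⊗|110⟩⟨100| − U_ℓ†⊗|100⟩⟨110| + I⊗|110⟩⟨110|`, acting on
clock qubits `ℓ-1, ℓ, ℓ+1` (1-indexed; `0`-indexed positions `ℓ-2, ℓ-1, ℓ`, with the
virtual boundary convention giving the modified terms for `ℓ = 1, L`). -/
noncomputable def Hprop (n L : ℕ) (U : ℕ → Matrix (Fin n → Bool) (Fin n → Bool) ℂ) (ℓ : ℕ) :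
    Matrix ((Fin n → Bool) × (Fin L → Bool)) ((Fin n → Bool) × (Fin L → Bool)) ℂ :=
  Matrix.of fun p q =>
    (if p.1 = q.1 ∧ p.2 = q.2 ∧ vclk p.2 ((ℓ : ℤ) - 2) = true ∧
        vclk p.2 ((ℓ : ℤ) - 1) = false ∧ vclk p.2 (ℓ : ℤ) = false then 1 else 0)
    - (if vclk p.2 ((ℓ : ℤ) - 2) = true ∧ vclk p.2 ((ℓ : ℤ) - 1) = true ∧
          vclk p.2 (ℓ : ℤ) = false ∧
          vclk q.2 ((ℓ : ℤ) - 2) = true ∧ vclk q.2 ((ℓ : ℤ) - 1) = false ∧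
          vclk q.2 (ℓ : ℤ) = false ∧
          agreeOff p.2 q.2 {(ℓ : ℤ) - 2, (ℓ : ℤ) - 1, (ℓ : ℤ)}
        then U ℓ p.1 q.1 else 0)
    - (if vclk p.2 ((ℓ : ℤ) - 2) = true ∧ vclk p.2 ((ℓ : ℤ) - 1) = false ∧
          vclk p.2 (ℓ : ℤ) = false ∧
          vclk q.2 ((ℓ : ℤ) - 2) = true ∧ vclk q.2 ((ℓ : ℤ) - 1) = true ∧
          vclk q.2 (ℓ : ℤ) = false ∧
          agreeOff p.2 q.2 {(ℓ : ℤ) - 2, (ℓ : ℤ) - 1, (ℓ : ℤ)}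
        then star (U ℓ q.1 p.1) else 0)
    + (if p.1 = q.1 ∧ p.2 = q.2 ∧ vclk p.2 ((ℓ : ℤ) - 2) = true ∧
        vclk p.2 ((ℓ : ℤ) - 1) = true ∧ vclk p.2 (ℓ : ℤ) = false then 1 else 0)

/-- `H_clock = ∑_{ℓ=1}^{L-1} |01⟩⟨01|_{ℓ,ℓ+1}`: energy penalty for illegal clock
states containing the substring `01`. -/
noncomputable def Hclock (n L : ℕ) :
    Matrix ((Fin n → Bool) × (Fin L → Bool)) ((Fin n → Bool) × (Fin L → Bool)) ℂ :=
  Matrix.of fun p q =>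
    ∑ j ∈ Finset.range (L - 1),
      if p = q ∧ vclk p.2 (j : ℤ) = false ∧ vclk p.2 ((j : ℤ) + 1) = true then 1 else 0

/-- `H_input = ∑_{i=1}^{n} |1⟩⟨1|_i ⊗ |0⟩⟨0|^c_1`: penalty if the clock is at time `0`
but some computational qubit is `1`. -/
noncomputable def Hinput (n L : ℕ) :
    Matrix ((Fin n → Bool) × (Fin L → Bool)) ((Fin n → Bool) × (Fin L → Bool)) ℂ :=
  Matrix.of fun p q =>
    ∑ i : Fin n, if p = q ∧ p.1 i = true ∧ vclk p.2 (0 : ℤ) = false then 1 else 0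

/-- `H_final = (1/2)∑_{ℓ=1}^{L} H_ℓ + H_input + H_clock`. -/
noncomputable def Hfinal (n L : ℕ) (U : ℕ → Matrix (Fin n → Bool) (Fin n → Bool) ℂ) :
    Matrix ((Fin n → Bool) × (Fin L → Bool)) ((Fin n → Bool) × (Fin L → Bool)) ℂ :=
  (1 / 2 : ℂ) • (∑ ℓ ∈ Finset.Icc 1 L, Hprop n L U ℓ) + Hinput n L + Hclock n L

/-- `α ℓ = U_ℓ ⋯ U_1 |0^n⟩`, the state of the circuit after `ℓ` gates. -/
noncomputable def alpha (n : ℕ) (U : ℕ → Matrix (Fin n → Bool) (Fin n → Bool) ℂ) :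
    ℕ → (Fin n → Bool) → ℂ
  | 0 => fun x => if x = fun _ => false then 1 else 0
  | ℓ + 1 => (U (ℓ + 1)).mulVec (alpha n U ℓ)

/-- The history state `|η⟩ = (1/√(L+1)) ∑_{ℓ=0}^{L} |α(ℓ)⟩ ⊗ |1^ℓ 0^(L-ℓ)⟩`. -/
noncomputable def historyState (n L : ℕ)
    (U : ℕ → Matrix (Fin n → Bool) (Fin n → Bool) ℂ) :
    (Fin n → Bool) × (Fin L → Bool) → ℂ :=
  fun p => ((1 / Real.sqrt (L + 1) : ℝ) : ℂ) *
    ∑ ℓ ∈ Finset.range (L + 1), if p.2 = clk L ℓ then alpha n U ℓ p.1 else 0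

lemma vclk_coe {L : ℕ} (c : Fin L → Bool) (j : Fin L) : vclk c ((j : ℕ) : ℤ) = c j := by
  unfold vclk
  rw [if_neg (by omega), dif_pos (by simp)]
  congr 1

lemma vclk_clk {L m : ℕ} (hm : m ≤ L) (j : ℤ) :
    vclk (clk L m) j = decide (j < (m : ℤ)) := by
  unfold vclk clk
  split_ifs with h1 h2
  · simp; omega
  · simp; omega
  · simp; omega

lemma clk_inj {L m m' : ℕ} (hm : m ≤ L) (hm' : m' ≤ L)
    (h : clk L m = clk L m') : m = m' := by
  have h1 := congrArg (fun c => vclk c (m : ℤ)) h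
  have h2 := congrArg (fun c => vclk c (m' : ℤ)) h
  simp only [vclk_clk hm, vclk_clk hm'] at h1 h2
  simp at h1 h2; omega

lemma vclk_eq_of_agree {L : ℕ} {c c' : Fin L → Bool} {T : Finset ℤ}
    (hag : agreeOff c c' T) {j : ℤ} (hj : j ∉ T) : vclk c j = vclk c' j := by
  unfold vclk
  split_ifs with h1 h2
  · rfl
  · exact hag ⟨j.toNat, h2⟩ (by simpa [Int.toNat_of_nonneg (by omega : (0:ℤ) ≤ j)] using hj)
  · rfl

lemma eq_of_vclk_agree {L : ℕ} {c c' : Fin L → Bool} {T : Finset ℤ}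
    (hT : ∀ j ∈ T, vclk c j = vclk c' j) (hag : agreeOff c c' T) : c = c' := by
  funext j
  by_cases hj : ((j : ℕ) : ℤ) ∈ T
  · have := hT _ hj
    rwa [vclk_coe, vclk_coe] at this
  · exact hag j hj

def patS (ℓ : ℕ) : Finset ℤ := {(ℓ : ℤ) - 2, (ℓ : ℤ) - 1, (ℓ : ℤ)}

def pat100 {L : ℕ} (ℓ : ℕ) (c : Fin L → Bool) : Prop :=
  vclk c ((ℓ : ℤ) - 2) = true ∧ vclk c ((ℓ : ℤ) - 1) = false ∧ vclk c (ℓ : ℤ) = false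

def pat110 {L : ℕ} (ℓ : ℕ) (c : Fin L → Bool) : Prop :=
  vclk c ((ℓ : ℤ) - 2) = true ∧ vclk c ((ℓ : ℤ) - 1) = true ∧ vclk c (ℓ : ℤ) = false

lemma pat100_clk_iff {L ℓ m : ℕ} (hℓ : 1 ≤ ℓ) (hℓL : ℓ ≤ L) (hm : m ≤ L) :
    pat100 ℓ (clk L m) ↔ m = ℓ - 1 := by
  unfold pat100
  simp only [vclk_clk hm]
  simp; omega

lemma pat110_clk_iff {L ℓ m : ℕ} (hℓ : 1 ≤ ℓ) (hℓL : ℓ ≤ L) (hm : m ≤ L) :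
    pat110 ℓ (clk L m) ↔ m = ℓ := by
  unfold pat110
  simp only [vclk_clk hm]
  simp; omega

lemma agreeOff_symm {L : ℕ} {c c' : Fin L → Bool} {T : Finset ℤ}
    (h : agreeOff c c' T) : agreeOff c' c T := fun j hj => (h j hj).symm

lemma agreeOff_trans {L : ℕ} {c c' c'' : Fin L → Bool} {T : Finset ℤ}
    (h : agreeOff c c' T) (h' : agreeOff c' c'' T) : agreeOff c c'' T :=
  fun j hj => (h j hj).trans (h' j hj)

lemma clk_agree {L ℓ : ℕ} (hℓ : 1 ≤ ℓ) (hℓL : ℓ ≤ L) :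
    agreeOff (clk L ℓ) (clk L (ℓ - 1)) (patS ℓ) := by
  intro j hj
  simp only [patS, Finset.mem_insert, Finset.mem_singleton] at hj
  unfold clk
  simp only [decide_eq_decide]
  omega

lemma eq_of_pat_agree {L ℓ : ℕ} {c c' : Fin L → Bool}
    (h1 : vclk c ((ℓ : ℤ) - 2) = vclk c' ((ℓ : ℤ) - 2))
    (h2 : vclk c ((ℓ : ℤ) - 1) = vclk c' ((ℓ : ℤ) - 1))
    (h3 : vclk c (ℓ : ℤ) = vclk c' (ℓ : ℤ))
    (hag : agreeOff c c' (patS ℓ)) : c = c' := by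
  refine eq_of_vclk_agree (T := patS ℓ) ?_ hag
  intro j hj
  simp only [patS, Finset.mem_insert, Finset.mem_singleton] at hj
  rcases hj with rfl | rfl | rfl <;> assumption

lemma eq_clk_of_pat110 {L ℓ : ℕ} {c : Fin L → Bool} (hℓ : 1 ≤ ℓ) (hℓL : ℓ ≤ L)
    (hp : pat110 ℓ c) (hag : agreeOff c (clk L (ℓ - 1)) (patS ℓ)) : c = clk L ℓ := by
  have hcl : pat110 ℓ (clk L ℓ) := (pat110_clk_iff hℓ hℓL hℓL).2 rfl
  refine eq_of_pat_agree (ℓ := ℓ) ?_ ?_ ?_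
    (agreeOff_trans hag (agreeOff_symm (clk_agree hℓ hℓL)))
  · rw [hp.1, hcl.1]
  · rw [hp.2.1, hcl.2.1]
  · rw [hp.2.2, hcl.2.2]

lemma eq_clk_of_pat100 {L ℓ : ℕ} {c : Fin L → Bool} (hℓ : 1 ≤ ℓ) (hℓL : ℓ ≤ L)
    (hp : pat100 ℓ c) (hag : agreeOff c (clk L ℓ) (patS ℓ)) : c = clk L (ℓ - 1) := by
  have hcl : pat100 ℓ (clk L (ℓ - 1)) := (pat100_clk_iff hℓ hℓL (by omega)).2 rfl
  refine eq_of_pat_agree (ℓ := ℓ) ?_ ?_ ?_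
    (agreeOff_trans hag (clk_agree hℓ hℓL))
  · rw [hp.1, hcl.1]
  · rw [hp.2.1, hcl.2.1]
  · rw [hp.2.2, hcl.2.2]

open scoped Matrix

lemma vclk_update {L : ℕ} (c : Fin L → Bool) (i : Fin L) (b : Bool) (j : ℤ) :
    vclk (Function.update c i b) j = if j = ((i : ℕ) : ℤ) then b else vclk c j := by
  by_cases hj : j = ((i : ℕ) : ℤ)
  · subst hj
    rw [if_pos rfl]
    unfold vclk
    rw [if_neg (by omega), dif_pos (by simp)]
    simp [Function.update_apply, Fin.ext_iff]
  · rw [if_neg hj]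
    unfold vclk
    split_ifs with h1 h2
    · rfl
    · rw [Function.update_apply, if_neg]
      intro h
      apply hj
      have := congrArg Fin.val h
      simp only [Fin.val_mk] at this
      omega
    · rfl
section helper
variable {n L : ℕ}

instance {L : ℕ} (ℓ : ℕ) (c : Fin L → Bool) : Decidable (pat100 ℓ c) := by
  unfold pat100; infer_instance

instance {L : ℕ} (ℓ : ℕ) (c : Fin L → Bool) : Decidable (pat110 ℓ c) := by
  unfold pat110; infer_instance


/-! ### Auxiliary lemmas -/

lemma Hprop_apply (U : ℕ → Matrix (Fin n → Bool) (Fin n → Bool) ℂ) (ℓ : ℕ)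
    (p q : (Fin n → Bool) × (Fin L → Bool)) :
    Hprop n L U ℓ p q =
      (if p.1 = q.1 ∧ p.2 = q.2 ∧ pat100 ℓ p.2 then (1 : ℂ) else 0)
      - (if pat110 ℓ p.2 ∧ pat100 ℓ q.2 ∧ agreeOff p.2 q.2 (patS ℓ) then U ℓ p.1 q.1 else 0)
      - (if pat100 ℓ p.2 ∧ pat110 ℓ q.2 ∧ agreeOff p.2 q.2 (patS ℓ)
          then star (U ℓ q.1 p.1) else 0)
      + (if p.1 = q.1 ∧ p.2 = q.2 ∧ pat110 ℓ p.2 then 1 else 0) := by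
  simp only [Hprop, Matrix.of_apply, pat100, pat110, patS, and_assoc]
  congr

noncomputable def etaRaw (n L : ℕ) (U : ℕ → Matrix (Fin n → Bool) (Fin n → Bool) ℂ) :
    (Fin n → Bool) × (Fin L → Bool) → ℂ :=
  fun p => ∑ ℓ ∈ Finset.range (L + 1), if p.2 = clk L ℓ then alpha n U ℓ p.1 else 0

lemma historyState_eq (U : ℕ → Matrix (Fin n → Bool) (Fin n → Bool) ℂ) :
    historyState n L U = ((1 / Real.sqrt (L + 1) : ℝ) : ℂ) • etaRaw n L U := by
  funext p
  simp [historyState, etaRaw, Pi.smul_apply, smul_eq_mul]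

lemma mulVec_etaRaw (U : ℕ → Matrix (Fin n → Bool) (Fin n → Bool) ℂ)
    (H : Matrix ((Fin n → Bool) × (Fin L → Bool)) ((Fin n → Bool) × (Fin L → Bool)) ℂ)
    (p : (Fin n → Bool) × (Fin L → Bool)) :
    (H *ᵥ etaRaw n L U) p
      = ∑ m ∈ Finset.range (L + 1), ∑ x : Fin n → Bool,
          H p (x, clk L m) * alpha n U m x := by
  simp only [Matrix.mulVec, dotProduct, etaRaw, Finset.mul_sum, mul_ite, mul_zero]
  rw [Finset.sum_comm]
  refine Finset.sum_congr rfl fun m _ => ?_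
  rw [Fintype.sum_prod_type]
  refine Finset.sum_congr rfl fun x _ => ?_
  simp [Finset.sum_ite_eq']

lemma alpha_succ' (U : ℕ → Matrix (Fin n → Bool) (Fin n → Bool) ℂ) {ℓ : ℕ} (hℓ : 1 ≤ ℓ) :
    alpha n U ℓ = (U ℓ) *ᵥ (alpha n U (ℓ - 1)) := by
  obtain ⟨k, rfl⟩ : ∃ k, ℓ = k + 1 := ⟨ℓ - 1, by omega⟩
  simp [alpha]

lemma star_sum_alpha (U : ℕ → Matrix (Fin n → Bool) (Fin n → Bool) ℂ)
    (hU : ∀ ℓ, U ℓ ∈ Matrix.unitaryGroup (Fin n → Bool) ℂ) {ℓ : ℕ} (hℓ : 1 ≤ ℓ)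
    (x : Fin n → Bool) :
    ∑ y : Fin n → Bool, star (U ℓ y x) * alpha n U ℓ y = alpha n U (ℓ - 1) x := by
  have h : (U ℓ)ᴴ *ᵥ alpha n U ℓ = alpha n U (ℓ - 1) := by
    rw [alpha_succ' U hℓ, Matrix.mulVec_mulVec]
    have h1 : (U ℓ)ᴴ * U ℓ = 1 := (hU ℓ).1
    rw [h1, Matrix.one_mulVec]
  have := congrFun h x
  simpa [Matrix.mulVec, dotProduct, Matrix.conjTranspose_apply] using this

/-- The propagation term kills the (unnormalised) history state. -/
lemma Hprop_mulVec_eta (U : ℕ → Matrix (Fin n → Bool) (Fin n → Bool) ℂ)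
    (hU : ∀ ℓ, U ℓ ∈ Matrix.unitaryGroup (Fin n → Bool) ℂ) {ℓ : ℕ}
    (hℓ : 1 ≤ ℓ) (hℓL : ℓ ≤ L) :
    (Hprop n L U ℓ) *ᵥ etaRaw n L U = 0 := by
  funext p
  simp only [Pi.zero_apply]
  rw [mulVec_etaRaw]
  have hS1 : ∑ m ∈ Finset.range (L + 1), ∑ x : Fin n → Bool,
      (if p.1 = x ∧ p.2 = clk L m ∧ pat100 ℓ p.2 then (1 : ℂ) else 0) * alpha n U m x
      = if p.2 = clk L (ℓ - 1) then alpha n U (ℓ - 1) p.1 else 0 := by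
    have hin : ∀ m, ∑ x : Fin n → Bool,
        (if p.1 = x ∧ p.2 = clk L m ∧ pat100 ℓ p.2 then (1 : ℂ) else 0) * alpha n U m x
        = if p.2 = clk L m ∧ pat100 ℓ p.2 then alpha n U m p.1 else 0 := by
      intro m
      simp [ite_and, Finset.sum_ite_eq]
    simp only [hin]
    rw [Finset.sum_eq_single (ℓ - 1)]
    · refine if_congr ⟨fun h => h.1, fun h => ?_⟩ rfl rfl
      exact ⟨h, h ▸ (pat100_clk_iff hℓ hℓL (by omega)).2 rfl⟩
    · intro m hm hne
      rw [if_neg]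
      rintro ⟨h1, h2⟩
      rw [h1] at h2
      have hmL : m ≤ L := Nat.lt_succ_iff.mp (Finset.mem_range.mp hm)
      exact hne ((pat100_clk_iff hℓ hℓL hmL).1 h2)
    · intro h
      exact absurd (Finset.mem_range.mpr (by omega)) h
  have hS4 : ∑ m ∈ Finset.range (L + 1), ∑ x : Fin n → Bool,
      (if p.1 = x ∧ p.2 = clk L m ∧ pat110 ℓ p.2 then (1 : ℂ) else 0) * alpha n U m x
      = if p.2 = clk L ℓ then alpha n U ℓ p.1 else 0 := by
    have hin : ∀ m, ∑ x : Fin n → Bool,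
        (if p.1 = x ∧ p.2 = clk L m ∧ pat110 ℓ p.2 then (1 : ℂ) else 0) * alpha n U m x
        = if p.2 = clk L m ∧ pat110 ℓ p.2 then alpha n U m p.1 else 0 := by
      intro m
      simp [ite_and, Finset.sum_ite_eq]
    simp only [hin]
    rw [Finset.sum_eq_single ℓ]
    · refine if_congr ⟨fun h => h.1, fun h => ?_⟩ rfl rfl
      exact ⟨h, h ▸ (pat110_clk_iff hℓ hℓL hℓL).2 rfl⟩
    · intro m hm hne
      rw [if_neg]
      rintro ⟨h1, h2⟩
      rw [h1] at h2
      have hmL : m ≤ L := Nat.lt_succ_iff.mp (Finset.mem_range.mp hm)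
      exact hne ((pat110_clk_iff hℓ hℓL hmL).1 h2)
    · intro h
      exact absurd (Finset.mem_range.mpr (by omega)) h
  have hS2 : ∑ m ∈ Finset.range (L + 1), ∑ x : Fin n → Bool,
      (if pat110 ℓ p.2 ∧ pat100 ℓ (clk L m) ∧ agreeOff p.2 (clk L m) (patS ℓ)
        then U ℓ p.1 x else 0) * alpha n U m x
      = if p.2 = clk L ℓ then alpha n U ℓ p.1 else 0 := by
    have hin : ∀ m, ∑ x : Fin n → Bool,
        (if pat110 ℓ p.2 ∧ pat100 ℓ (clk L m) ∧ agreeOff p.2 (clk L m) (patS ℓ)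
          then U ℓ p.1 x else 0) * alpha n U m x
        = if pat110 ℓ p.2 ∧ pat100 ℓ (clk L m) ∧ agreeOff p.2 (clk L m) (patS ℓ)
          then ∑ x : Fin n → Bool, U ℓ p.1 x * alpha n U m x else 0 := by
      intro m
      split_ifs with h <;> simp
    simp only [hin]
    rw [Finset.sum_eq_single (ℓ - 1)]
    · have hval : ∑ x : Fin n → Bool, U ℓ p.1 x * alpha n U (ℓ - 1) x = alpha n U ℓ p.1 := by
        rw [alpha_succ' U hℓ]
        simp [Matrix.mulVec, dotProduct]
      rw [hval]
      refine if_congr ⟨fun h => ?_, fun h => ?_⟩ rfl rfl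
      · exact eq_clk_of_pat110 hℓ hℓL h.1 h.2.2
      · rw [h]
        exact ⟨(pat110_clk_iff hℓ hℓL hℓL).2 rfl,
          (pat100_clk_iff hℓ hℓL (by omega)).2 rfl, clk_agree hℓ hℓL⟩
    · intro m hm hne
      rw [if_neg]
      rintro ⟨-, h2, -⟩
      have hmL : m ≤ L := Nat.lt_succ_iff.mp (Finset.mem_range.mp hm)
      exact hne ((pat100_clk_iff hℓ hℓL hmL).1 h2)
    · intro h
      exact absurd (Finset.mem_range.mpr (by omega)) h
  have hS3 : ∑ m ∈ Finset.range (L + 1), ∑ x : Fin n → Bool,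
      (if pat100 ℓ p.2 ∧ pat110 ℓ (clk L m) ∧ agreeOff p.2 (clk L m) (patS ℓ)
        then star (U ℓ x p.1) else 0) * alpha n U m x
      = if p.2 = clk L (ℓ - 1) then alpha n U (ℓ - 1) p.1 else 0 := by
    have hin : ∀ m, ∑ x : Fin n → Bool,
        (if pat100 ℓ p.2 ∧ pat110 ℓ (clk L m) ∧ agreeOff p.2 (clk L m) (patS ℓ)
          then star (U ℓ x p.1) else 0) * alpha n U m x
        = if pat100 ℓ p.2 ∧ pat110 ℓ (clk L m) ∧ agreeOff p.2 (clk L m) (patS ℓ)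
          then ∑ x : Fin n → Bool, star (U ℓ x p.1) * alpha n U m x else 0 := by
      intro m
      split_ifs with h <;> simp
    simp only [hin]
    rw [Finset.sum_eq_single ℓ]
    · rw [star_sum_alpha U hU hℓ]
      refine if_congr ⟨fun h => ?_, fun h => ?_⟩ rfl rfl
      · exact eq_clk_of_pat100 hℓ hℓL h.1 h.2.2
      · rw [h]
        refine ⟨(pat100_clk_iff hℓ hℓL (by omega)).2 rfl,
          (pat110_clk_iff hℓ hℓL hℓL).2 rfl, agreeOff_symm (clk_agree hℓ hℓL)⟩
    · intro m hm hne
      rw [if_neg]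
      rintro ⟨-, h2, -⟩
      have hmL : m ≤ L := Nat.lt_succ_iff.mp (Finset.mem_range.mp hm)
      exact hne ((pat110_clk_iff hℓ hℓL hmL).1 h2)
    · intro h
      exact absurd (Finset.mem_range.mpr (by omega)) h
  calc ∑ m ∈ Finset.range (L + 1), ∑ x : Fin n → Bool,
        Hprop n L U ℓ p (x, clk L m) * alpha n U m x
      = (∑ m ∈ Finset.range (L + 1), ∑ x : Fin n → Bool,
          (if p.1 = x ∧ p.2 = clk L m ∧ pat100 ℓ p.2 then (1 : ℂ) else 0) * alpha n U m x)
        - (∑ m ∈ Finset.range (L + 1), ∑ x : Fin n → Bool,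
          (if pat110 ℓ p.2 ∧ pat100 ℓ (clk L m) ∧ agreeOff p.2 (clk L m) (patS ℓ)
            then U ℓ p.1 x else 0) * alpha n U m x)
        - (∑ m ∈ Finset.range (L + 1), ∑ x : Fin n → Bool,
          (if pat100 ℓ p.2 ∧ pat110 ℓ (clk L m) ∧ agreeOff p.2 (clk L m) (patS ℓ)
            then star (U ℓ x p.1) else 0) * alpha n U m x)
        + (∑ m ∈ Finset.range (L + 1), ∑ x : Fin n → Bool,
          (if p.1 = x ∧ p.2 = clk L m ∧ pat110 ℓ p.2 then (1 : ℂ) else 0) * alpha n U m x) := by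
        simp only [Hprop_apply, sub_mul, add_mul, Finset.sum_sub_distrib,
          Finset.sum_add_distrib]
    _ = 0 := by
        rw [hS1, hS2, hS3, hS4]
        ring

lemma Hinput_mulVec_eta (U : ℕ → Matrix (Fin n → Bool) (Fin n → Bool) ℂ) :
    Hinput n L *ᵥ etaRaw n L U = 0 := by
  funext p
  simp only [Pi.zero_apply]
  rw [mulVec_etaRaw]
  refine Finset.sum_eq_zero fun m hm => Finset.sum_eq_zero fun x _ => ?_
  have hmL : m ≤ L := Nat.lt_succ_iff.mp (Finset.mem_range.mp hm)
  simp only [Hinput, Matrix.of_apply, Finset.sum_mul]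
  refine Finset.sum_eq_zero fun i _ => ?_
  rw [ite_mul, zero_mul]
  split_ifs with h
  · obtain ⟨hpq, hi, h0⟩ := h
    have hp2 : p.2 = clk L m := by rw [hpq]
    have hp1 : p.1 = x := by rw [hpq]
    rw [hp2, vclk_clk hmL] at h0
    have hm0 : m = 0 := by simpa using h0
    subst hm0
    have hx : x ≠ fun _ => false := by
      intro hx
      rw [← hp1] at hx
      rw [hx] at hi
      simp at hi
    simp [alpha, hx]
  · rfl

lemma Hclock_mulVec_eta (U : ℕ → Matrix (Fin n → Bool) (Fin n → Bool) ℂ) :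
    Hclock n L *ᵥ etaRaw n L U = 0 := by
  funext p
  simp only [Pi.zero_apply]
  rw [mulVec_etaRaw]
  refine Finset.sum_eq_zero fun m hm => Finset.sum_eq_zero fun x _ => ?_
  have hmL : m ≤ L := Nat.lt_succ_iff.mp (Finset.mem_range.mp hm)
  simp only [Hclock, Matrix.of_apply, Finset.sum_mul]
  refine Finset.sum_eq_zero fun j _ => ?_
  rw [ite_mul, zero_mul]
  rw [if_neg]
  rintro ⟨hpq, h0, h1⟩
  have hp2 : p.2 = clk L m := by rw [hpq]
  rw [hp2, vclk_clk hmL] at h0 h1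
  simp at h0 h1
  omega

/-! ### The factorisation `H_ℓ = A * Aᴴ` -/

noncomputable def Amat (n L : ℕ) (U : ℕ → Matrix (Fin n → Bool) (Fin n → Bool) ℂ) (ℓ : ℕ) :
    Matrix ((Fin n → Bool) × (Fin L → Bool)) ((Fin n → Bool) × (Fin L → Bool)) ℂ :=
  Matrix.of fun p q =>
    (if p.1 = q.1 ∧ p.2 = q.2 ∧ pat100 ℓ p.2 then (1 : ℂ) else 0)
    - (if pat110 ℓ p.2 ∧ pat100 ℓ q.2 ∧ agreeOff p.2 q.2 (patS ℓ) then U ℓ p.1 q.1 else 0)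

lemma flip_pat100 {ℓ : ℕ} (hℓ : 1 ≤ ℓ) (hℓL : ℓ ≤ L) {c : Fin L → Bool}
    (hc : pat110 ℓ c) :
    pat100 ℓ (Function.update c ⟨ℓ - 1, by omega⟩ false) := by
  obtain ⟨h1, h2, h3⟩ := hc
  refine ⟨?_, ?_, ?_⟩
  · rw [vclk_update]
    rw [if_neg (by simp; omega)]
    exact h1
  · rw [vclk_update, if_pos (by simp; omega)]
  · rw [vclk_update, if_neg (by simp; omega)]
    exact h3

lemma flip_agree {ℓ : ℕ} (hℓ : 1 ≤ ℓ) (hℓL : ℓ ≤ L) (c : Fin L → Bool) :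
    agreeOff c (Function.update c ⟨ℓ - 1, by omega⟩ false) (patS ℓ) := by
  intro j hj
  simp only [patS, Finset.mem_insert, Finset.mem_singleton] at hj
  rw [Function.update_apply, if_neg]
  intro h
  apply hj
  rw [h]
  simp
  omega

lemma flip_unique {ℓ : ℕ} (hℓ : 1 ≤ ℓ) (hℓL : ℓ ≤ L) {c c' : Fin L → Bool}
    (hc : pat110 ℓ c) (hc' : pat100 ℓ c') (hag : agreeOff c c' (patS ℓ)) :
    c' = Function.update c ⟨ℓ - 1, by omega⟩ false := by
  have h0 := flip_pat100 (L := L) hℓ hℓL hc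
  refine eq_of_pat_agree (ℓ := ℓ) ?_ ?_ ?_
    (agreeOff_trans (agreeOff_symm hag) (flip_agree hℓ hℓL c))
  · rw [hc'.1, h0.1]
  · rw [hc'.2.1, h0.2.1]
  · rw [hc'.2.2, h0.2.2]

lemma Hprop_factor (U : ℕ → Matrix (Fin n → Bool) (Fin n → Bool) ℂ)
    (hU : ∀ ℓ, U ℓ ∈ Matrix.unitaryGroup (Fin n → Bool) ℂ) {ℓ : ℕ}
    (hℓ : 1 ≤ ℓ) (hℓL : ℓ ≤ L) :
    Hprop n L U ℓ = Amat n L U ℓ * (Amat n L U ℓ)ᴴ := by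
  ext p q
  rw [Hprop_apply, Matrix.mul_apply]
  have expand : ∀ r, Amat n L U ℓ p r * (Amat n L U ℓ)ᴴ r q
      = (if p.1 = r.1 ∧ p.2 = r.2 ∧ pat100 ℓ p.2 then (1 : ℂ) else 0)
          * star (if q.1 = r.1 ∧ q.2 = r.2 ∧ pat100 ℓ q.2 then (1 : ℂ) else 0)
        - (if p.1 = r.1 ∧ p.2 = r.2 ∧ pat100 ℓ p.2 then (1 : ℂ) else 0)
          * star (if pat110 ℓ q.2 ∧ pat100 ℓ r.2 ∧ agreeOff q.2 r.2 (patS ℓ)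
              then U ℓ q.1 r.1 else 0)
        - (if pat110 ℓ p.2 ∧ pat100 ℓ r.2 ∧ agreeOff p.2 r.2 (patS ℓ)
              then U ℓ p.1 r.1 else 0)
          * star (if q.1 = r.1 ∧ q.2 = r.2 ∧ pat100 ℓ q.2 then (1 : ℂ) else 0)
        + (if pat110 ℓ p.2 ∧ pat100 ℓ r.2 ∧ agreeOff p.2 r.2 (patS ℓ)
              then U ℓ p.1 r.1 else 0)
          * star (if pat110 ℓ q.2 ∧ pat100 ℓ r.2 ∧ agreeOff q.2 r.2 (patS ℓ)
              then U ℓ q.1 r.1 else 0) := by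
    intro r
    rw [Matrix.conjTranspose_apply]
    simp only [Amat, Matrix.of_apply, star_sub]
    ring
  rw [Finset.sum_congr rfl fun r _ => expand r]
  rw [Finset.sum_add_distrib, Finset.sum_sub_distrib, Finset.sum_sub_distrib]
  have haa : ∑ r : (Fin n → Bool) × (Fin L → Bool),
      (if p.1 = r.1 ∧ p.2 = r.2 ∧ pat100 ℓ p.2 then (1 : ℂ) else 0)
        * star (if q.1 = r.1 ∧ q.2 = r.2 ∧ pat100 ℓ q.2 then (1 : ℂ) else 0)
      = if p.1 = q.1 ∧ p.2 = q.2 ∧ pat100 ℓ p.2 then 1 else 0 := by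
    rw [Fintype.sum_eq_single p]
    · by_cases hpq : p.1 = q.1 ∧ p.2 = q.2
      · obtain ⟨h1, h2⟩ := hpq
        rw [← h1, ← h2]
        by_cases hp : pat100 ℓ p.2 <;> simp [hp]
      · rw [if_neg (show ¬(p.1 = q.1 ∧ p.2 = q.2 ∧ pat100 ℓ p.2) by tauto),
          if_neg (show ¬(q.1 = p.1 ∧ q.2 = p.2 ∧ pat100 ℓ q.2) by
            rintro ⟨h1, h2, -⟩; exact hpq ⟨h1.symm, h2.symm⟩), star_zero, mul_zero]
    · intro r hr
      rw [if_neg, zero_mul]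
      rintro ⟨h1, h2, -⟩
      exact hr (Prod.ext_iff.mpr ⟨h1.symm, h2.symm⟩)
  have had : ∑ r : (Fin n → Bool) × (Fin L → Bool),
      (if p.1 = r.1 ∧ p.2 = r.2 ∧ pat100 ℓ p.2 then (1 : ℂ) else 0)
        * star (if pat110 ℓ q.2 ∧ pat100 ℓ r.2 ∧ agreeOff q.2 r.2 (patS ℓ)
            then U ℓ q.1 r.1 else 0)
      = if pat100 ℓ p.2 ∧ pat110 ℓ q.2 ∧ agreeOff p.2 q.2 (patS ℓ)
          then star (U ℓ q.1 p.1) else 0 := by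
    rw [Fintype.sum_eq_single p]
    · by_cases hp : pat100 ℓ p.2
      · rw [if_pos (show p.1 = p.1 ∧ p.2 = p.2 ∧ pat100 ℓ p.2 from ⟨rfl, rfl, hp⟩), one_mul]
        by_cases hq : pat110 ℓ q.2 ∧ agreeOff q.2 p.2 (patS ℓ)
        · rw [if_pos (show pat110 ℓ q.2 ∧ pat100 ℓ p.2 ∧ agreeOff q.2 p.2 (patS ℓ) from
              ⟨hq.1, hp, hq.2⟩),
            if_pos (show pat100 ℓ p.2 ∧ pat110 ℓ q.2 ∧ agreeOff p.2 q.2 (patS ℓ) from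
              ⟨hp, hq.1, agreeOff_symm hq.2⟩)]
        · rw [if_neg (show ¬(pat110 ℓ q.2 ∧ pat100 ℓ p.2 ∧ agreeOff q.2 p.2 (patS ℓ)) by
              tauto), star_zero,
            if_neg (show ¬(pat100 ℓ p.2 ∧ pat110 ℓ q.2 ∧ agreeOff p.2 q.2 (patS ℓ)) by
              rintro ⟨-, h2, h3⟩; exact hq ⟨h2, agreeOff_symm h3⟩)]
      · rw [if_neg (show ¬(p.1 = p.1 ∧ p.2 = p.2 ∧ pat100 ℓ p.2) by tauto), zero_mul,
          if_neg (show ¬(pat100 ℓ p.2 ∧ pat110 ℓ q.2 ∧ agreeOff p.2 q.2 (patS ℓ)) by tauto)]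
    · intro r hr
      rw [if_neg, zero_mul]
      rintro ⟨h1, h2, -⟩
      exact hr (Prod.ext_iff.mpr ⟨h1.symm, h2.symm⟩)
  have hbc : ∑ r : (Fin n → Bool) × (Fin L → Bool),
      (if pat110 ℓ p.2 ∧ pat100 ℓ r.2 ∧ agreeOff p.2 r.2 (patS ℓ)
            then U ℓ p.1 r.1 else 0)
        * star (if q.1 = r.1 ∧ q.2 = r.2 ∧ pat100 ℓ q.2 then (1 : ℂ) else 0)
      = if pat110 ℓ p.2 ∧ pat100 ℓ q.2 ∧ agreeOff p.2 q.2 (patS ℓ)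
          then U ℓ p.1 q.1 else 0 := by
    rw [Fintype.sum_eq_single q]
    · by_cases hq : pat100 ℓ q.2
      · rw [if_pos (show q.1 = q.1 ∧ q.2 = q.2 ∧ pat100 ℓ q.2 from ⟨rfl, rfl, hq⟩),
          star_one, mul_one]
      · rw [if_neg (show ¬(q.1 = q.1 ∧ q.2 = q.2 ∧ pat100 ℓ q.2) by tauto), star_zero,
          mul_zero, if_neg (show ¬(pat110 ℓ p.2 ∧ pat100 ℓ q.2 ∧ agreeOff p.2 q.2 (patS ℓ)) by
            tauto)]
    · intro r hr
      rw [if_neg (show ¬(q.1 = r.1 ∧ q.2 = r.2 ∧ pat100 ℓ q.2) by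
          rintro ⟨h1, h2, -⟩
          exact hr (Prod.ext_iff.mpr ⟨h1.symm, h2.symm⟩)), star_zero, mul_zero]
  have hbd : ∑ r : (Fin n → Bool) × (Fin L → Bool),
      (if pat110 ℓ p.2 ∧ pat100 ℓ r.2 ∧ agreeOff p.2 r.2 (patS ℓ)
            then U ℓ p.1 r.1 else 0)
        * star (if pat110 ℓ q.2 ∧ pat100 ℓ r.2 ∧ agreeOff q.2 r.2 (patS ℓ)
            then U ℓ q.1 r.1 else 0)
      = if p.1 = q.1 ∧ p.2 = q.2 ∧ pat110 ℓ p.2 then 1 else 0 := by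
    by_cases hp : pat110 ℓ p.2
    · set c₀ : Fin L → Bool := Function.update p.2 ⟨ℓ - 1, by omega⟩ false with hc₀
      rw [Fintype.sum_prod_type]
      have hinner : ∀ y : Fin n → Bool, (∑ c : Fin L → Bool,
          (if pat110 ℓ p.2 ∧ pat100 ℓ c ∧ agreeOff p.2 c (patS ℓ)
              then U ℓ p.1 y else 0)
            * star (if pat110 ℓ q.2 ∧ pat100 ℓ c ∧ agreeOff q.2 c (patS ℓ)
              then U ℓ q.1 y else 0))
          = (if pat110 ℓ q.2 ∧ pat100 ℓ c₀ ∧ agreeOff q.2 c₀ (patS ℓ)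
              then U ℓ p.1 y * star (U ℓ q.1 y) else 0) := by
        intro y
        rw [Fintype.sum_eq_single c₀]
        · rw [if_pos ⟨hp, flip_pat100 hℓ hℓL hp, flip_agree hℓ hℓL p.2⟩]
          split_ifs with h
          · rfl
          · simp
        · intro c hc
          rw [if_neg, zero_mul]
          rintro ⟨-, h2, h3⟩
          apply hc
          rw [hc₀]
          exact flip_unique hℓ hℓL hp h2 h3
      rw [Finset.sum_congr rfl fun y _ => hinner y]
      by_cases hq : pat110 ℓ q.2 ∧ agreeOff q.2 c₀ (patS ℓ)
      · have hq2 : q.2 = p.2 := by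
          refine eq_of_pat_agree (ℓ := ℓ) ?_ ?_ ?_
            (agreeOff_trans hq.2 (agreeOff_symm (flip_agree hℓ hℓL p.2)))
          · rw [hq.1.1, hp.1]
          · rw [hq.1.2.1, hp.2.1]
          · rw [hq.1.2.2, hp.2.2]
        have hUq : (∑ y : Fin n → Bool, U ℓ p.1 y * star (U ℓ q.1 y))
            = if p.1 = q.1 then (1 : ℂ) else 0 := by
          have h1 : U ℓ * star (U ℓ) = 1 := (hU ℓ).2
          calc (∑ y : Fin n → Bool, U ℓ p.1 y * star (U ℓ q.1 y))
              = (U ℓ * (U ℓ)ᴴ) p.1 q.1 := by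
                rw [Matrix.mul_apply]
                exact Finset.sum_congr rfl fun y _ => by rw [Matrix.conjTranspose_apply]
            _ = (1 : Matrix (Fin n → Bool) (Fin n → Bool) ℂ) p.1 q.1 := by
                rw [← Matrix.star_eq_conjTranspose, h1]
            _ = if p.1 = q.1 then 1 else 0 := Matrix.one_apply
        rw [Finset.sum_congr rfl fun y _ =>
          if_pos ⟨hq.1, flip_pat100 hℓ hℓL hp, hq.2⟩, hUq]
        refine if_congr ⟨fun h => ⟨h, hq2.symm, hp⟩, fun h => h.1⟩ rfl rfl
      · have hne : ¬(pat110 ℓ q.2 ∧ pat100 ℓ c₀ ∧ agreeOff q.2 c₀ (patS ℓ)) := by tauto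
        simp only [if_neg hne]
        rw [Finset.sum_const_zero, if_neg]
        rintro ⟨-, h2, h3⟩
        refine hq ⟨h2 ▸ h3, ?_⟩
        rw [← h2]
        exact flip_agree hℓ hℓL p.2
    · rw [if_neg (by tauto)]
      refine Finset.sum_eq_zero fun r _ => ?_
      rw [if_neg (by tauto), zero_mul]
  rw [haa, had, hbc, hbd]
  ring

/-! ### Positive semidefiniteness glue -/

lemma psd_add {m : Type*} [Fintype m] [DecidableEq m] {A B : Matrix m m ℂ}
    (hA : A.PosSemidef) (hB : B.PosSemidef) : (A + B).PosSemidef := by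
  refine ⟨hA.1.add hB.1, fun x => ?_⟩
  exact (hA.add hB).2 x

lemma psd_sum {m : Type*} [Fintype m] [DecidableEq m] {ι : Type*} (s : Finset ι)
    (f : ι → Matrix m m ℂ) (h : ∀ i ∈ s, (f i).PosSemidef) :
    (∑ i ∈ s, f i).PosSemidef :=
  Finset.sum_induction f _ (fun _ _ ha hb => psd_add ha hb) Matrix.PosSemidef.zero h

lemma psd_half {m : Type*} [Fintype m] [DecidableEq m] {A : Matrix m m ℂ}
    (hA : A.PosSemidef) : ((1 / 2 : ℂ) • A).PosSemidef := by
  have hhalf : (0 : ℂ) ≤ (1 / 2 : ℂ) := by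
    have : ((1 / 2 : ℝ) : ℂ) = (1 / 2 : ℂ) := by push_cast; ring
    rw [← this]
    exact Complex.zero_le_real.mpr (by norm_num)
  refine ⟨?_, fun x => ?_⟩
  · unfold Matrix.IsHermitian
    rw [Matrix.conjTranspose_smul, hA.1]
    congr 1
    rw [← Complex.ofReal_one, ← Complex.ofReal_ofNat, ← Complex.ofReal_div,
      RCLike.star_def, Complex.conj_ofReal]
  · exact (hA.smul hhalf).2 x

lemma Hinput_diag : Hinput n L = Matrix.diagonal
    (fun p : (Fin n → Bool) × (Fin L → Bool) =>
      ∑ i : Fin n, if p.1 i = true ∧ vclk p.2 (0 : ℤ) = false then (1 : ℂ) else 0) := by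
  ext p q
  by_cases h : p = q
  · subst h
    simp [Hinput, Matrix.diagonal_apply_eq]
  · rw [Matrix.diagonal_apply_ne _ h]
    simp only [Hinput, Matrix.of_apply]
    exact Finset.sum_eq_zero fun i _ => if_neg (by tauto)

lemma Hclock_diag : Hclock n L = Matrix.diagonal
    (fun p : (Fin n → Bool) × (Fin L → Bool) =>
      ∑ j ∈ Finset.range (L - 1),
        if vclk p.2 (j : ℤ) = false ∧ vclk p.2 ((j : ℤ) + 1) = true then (1 : ℂ) else 0) := by
  ext p q
  by_cases h : p = q
  · subst h
    simp [Hclock, Matrix.diagonal_apply_eq]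
  · rw [Matrix.diagonal_apply_ne _ h]
    simp only [Hclock, Matrix.of_apply]
    exact Finset.sum_eq_zero fun j _ => if_neg (by tauto)

lemma ite_one_zero_nonneg {P : Prop} [Decidable P] : (0 : ℂ) ≤ if P then 1 else 0 := by
  split_ifs
  · exact zero_le_one
  · exact le_refl 0

lemma sum_mulVec {m : Type*} [Fintype m] {ι : Type*} (s : Finset ι)
    (M : ι → Matrix m m ℂ) (v : m → ℂ) :
    (∑ i ∈ s, M i) *ᵥ v = ∑ i ∈ s, (M i) *ᵥ v := by
  funext p
  simp only [Matrix.mulVec, dotProduct, Finset.sum_apply, Matrix.sum_apply,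
    Finset.sum_mul]
  exact Finset.sum_comm

end helper

/-- The history state is a ground state of `H_final` with eigenvalue `0`:
`H_final |η⟩ = 0` and `H_final` is positive semidefinite. -/
theorem history_state_is_ground_state_of_Hfinal (n L : ℕ) (hL : 1 ≤ L)
    (U : ℕ → Matrix (Fin n → Bool) (Fin n → Bool) ℂ)
    (hU : ∀ ℓ, U ℓ ∈ Matrix.unitaryGroup (Fin n → Bool) ℂ) :
    (Hfinal n L U).PosSemidef ∧
    (Hfinal n L U).mulVec (historyState n L U) = 0 ∧
    historyState n L U ≠ 0 := by
  refine ⟨?_, ?_, ?_⟩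
  · -- positive semidefiniteness
    unfold Hfinal
    refine psd_add (psd_add ?_ ?_) ?_
    · refine psd_half (psd_sum _ _ fun ℓ hℓ => ?_)
      obtain ⟨h1, h2⟩ := Finset.mem_Icc.mp hℓ
      rw [Hprop_factor U hU h1 h2]
      exact Matrix.posSemidef_self_mul_conjTranspose _
    · rw [Hinput_diag]
      exact Matrix.posSemidef_diagonal_iff.mpr fun p =>
        Finset.sum_nonneg fun i _ => ite_one_zero_nonneg
    · rw [Hclock_diag]
      exact Matrix.posSemidef_diagonal_iff.mpr fun p =>
        Finset.sum_nonneg fun j _ => ite_one_zero_nonneg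
  · -- the history state is annihilated
    rw [historyState_eq, Matrix.mulVec_smul]
    have hE : Hfinal n L U *ᵥ etaRaw n L U = 0 := by
      unfold Hfinal
      rw [Matrix.add_mulVec, Matrix.add_mulVec, Matrix.smul_mulVec]
      rw [Hinput_mulVec_eta, Hclock_mulVec_eta]
      have hsum : (∑ ℓ ∈ Finset.Icc 1 L, Hprop n L U ℓ) *ᵥ etaRaw n L U = 0 := by
        rw [sum_mulVec]
        refine Finset.sum_eq_zero fun ℓ hℓ => ?_
        obtain ⟨h1, h2⟩ := Finset.mem_Icc.mp hℓ
        exact Hprop_mulVec_eta U hU h1 h2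
      rw [hsum]
      simp
    rw [hE]
    simp
  · -- the history state is nonzero
    intro h0
    have h1 : historyState n L U ((fun _ => false : Fin n → Bool), clk L 0) = 0 := by
      rw [h0]
      rfl
    unfold historyState at h1
    dsimp only at h1
    have hs : (∑ ℓ ∈ Finset.range (L + 1),
        if clk L 0 = clk L ℓ then alpha n U ℓ (fun _ => false) else 0) = 1 := by
      rw [Finset.sum_eq_single 0]
      · simp [alpha]
      · intro m hm hne
        rw [if_neg]
        intro h
        exact hne ((clk_inj (Nat.zero_le L) (Nat.lt_succ_iff.mp (Finset.mem_range.mp hm))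
          h).symm)
      · intro h
        exact absurd (Finset.mem_range.mpr (by omega)) h
    rw [hs, mul_one, Complex.ofReal_eq_zero, div_eq_zero_iff] at h1
    have hpos : (0 : ℝ) < Real.sqrt (L + 1) := Real.sqrt_pos.mpr (by positivity)
    rcases h1 with h1 | h1
    · exact one_ne_zero h1
    · exact absurd h1 (ne_of_gt hpos)
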